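/- Let p: T → W be a birational morphism of smooth projective surfaces and Δ an A-D-E configuration on T. If Δ is contracted by p, then Δ is of type A_n. Equivalently, no D_4 configuration can be contracted by a birational morphism of smooth projective surfaces. -/

import Mathlib

/-- An abstract smooth complex projective surface: its group of divisors with
intersection pairing, canonical divisor, effective cone, irreducible curves,
arithmetic genus (satisfying adjunction), and cohomology dimensions
`h⁰(D, O_D)`, `h¹(D, O_D)`, `h⁰(D, ω_D)`. -/
structure Surface where
  Div : Type
  grp : AddCommGroup Div
  inter : Div → Div → ℤ
  inter_comm : ∀ A B, inter A B = inter B A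
  inter_add_left : ∀ A B C, inter (A + B) C = inter A C + inter B C
  K : Div
  Eff : Div → Prop
  eff_zero : Eff 0
  eff_add : ∀ {A B}, Eff A → Eff B → Eff (A + B)
  Irr : Div → Prop
  irr_curve : ∀ {A}, Irr A → Eff A ∧ A ≠ 0
  pa : Div → ℤ
  adjunction : ∀ D, 2 * pa D - 2 = inter K D + inter D D
  h0O : Div → ℕ
  h1O : Div → ℕ
  h0ω : Div → ℕ
  pa_def : ∀ D, (1 : ℤ) - pa D = (h0O D : ℤ) - (h1O D : ℤ)
  serre : ∀ D, h0ω D = h1O D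

attribute [instance] Surface.grp

/-- A curve is a nonzero effective divisor. -/
def Surface.Curve (S : Surface) (D : S.Div) : Prop := S.Eff D ∧ D ≠ 0

/-- `D` is 1-connected: it is a curve and every decomposition `D = A + B`
into curves satisfies `A·B ≥ 1`. -/
def Surface.OneConnected (S : Surface) (D : S.Div) : Prop :=
  S.Curve D ∧ ∀ A B : S.Div, S.Curve A → S.Curve B → A + B = D → 1 ≤ S.inter A B

/-- The data of a birational morphism `p : T → W` of smooth projective surfaces,
a composition of `s` blow-ups, recorded on the source surface `S = T`:
the total exceptional divisors `E 1, …, E s` (total transforms of the exceptional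
curves of the blow-ups), the pullback `pK = p*K_W` of the canonical divisor of `W`,
and the predicate `Exc` of being supported on the `p`-exceptional locus
(i.e. contracted by `p` to a finite set of points). -/
structure Blowdown (S : Surface) (s : ℕ) where
  E : Fin s → S.Div
  pK : S.Div
  Exc : S.Div → Prop
  exc_zero : Exc 0
  exc_sub : ∀ {A B}, Exc A → Exc B → Exc (A - B)
  exc_E : ∀ i, Exc (E i)
  exc_comp : ∀ {D Γ}, Exc D → S.Eff D → S.Irr Γ → S.Eff (D - Γ) → Exc Γ
  E_curve : ∀ i, S.Curve (E i)
  K_eq : S.K = pK + ∑ i, E i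
  pK_exc : ∀ {D}, Exc D → S.inter pK D = 0
  EE : ∀ i j, S.inter (E i) (E j) = if i = j then -1 else 0
  negdef : ∀ {D}, Exc D → D ≠ 0 → S.inter D D < 0
  exc_span : ∀ {D}, Exc D → (∀ i, S.inter D (E i) = 0) → D = 0

/-- The dual graph of a configuration of irreducible curves `C i`: vertices are the
curves, and two distinct curves are adjacent when they meet (intersection number 1). -/
def configGraph (S : Surface) {n : ℕ} (C : Fin n → S.Div) : SimpleGraph (Fin n) where
  Adj i j := i ≠ j ∧ S.inter (C i) (C j) = 1
  symm := ⟨fun i j hij => ⟨hij.1.symm, by rw [S.inter_comm]; exact hij.2⟩⟩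
  loopless := ⟨fun i hi => hi.1 rfl⟩

/-- An A-D-E configuration on `S`: a reduced divisor `∑ C i` whose components `C i`
are distinct `-2`-curves (irreducible, `C i² = -2`, `K·C i = 0`), meeting pairwise
transversally in at most one point, whose dual graph is a tree (connected and acyclic)
and whose intersection matrix is negative definite; these conditions characterize the
configurations whose dual graph is a Dynkin diagram of type Aₙ, Dₙ or Eₙ. -/
structure ADEConfig (S : Surface) where
  n : ℕ
  npos : 0 < n
  C : Fin n → S.Div
  irr : ∀ i, S.Irr (C i)
  inj : Function.Injective C
  sq : ∀ i, S.inter (C i) (C i) = -2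
  KC : ∀ i, S.inter S.K (C i) = 0
  int01 : ∀ i j, i ≠ j → S.inter (C i) (C j) = 0 ∨ S.inter (C i) (C j) = 1
  tree : (configGraph S C).IsTree
  negdef : ∀ a : Fin n → ℤ, a ≠ 0 → ∑ i, ∑ j, a i * a j * S.inter (C i) (C j) < 0

/-- The configuration is of type `Aₙ`: its dual graph is a path. -/
def ADEConfig.IsTypeA {S : Surface} (Δ : ADEConfig S) : Prop :=
  ∃ e : Fin Δ.n ≃ Fin Δ.n, ∀ i j : Fin Δ.n,
    (configGraph S Δ.C).Adj (e i) (e j) ↔ ((i : ℕ) + 1 = (j : ℕ) ∨ (j : ℕ) + 1 = (i : ℕ))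

namespace Aux

/-- Intersection with `D` as an additive hom in the first variable. -/
def interL (S : Surface) (D : S.Div) : S.Div →+ ℤ where
  toFun A := S.inter A D
  map_zero' := by
    have h := S.inter_add_left 0 0 D; rw [add_zero] at h
    show S.inter 0 D = 0; omega
  map_add' A B := S.inter_add_left A B D

lemma inter_zero_left (S : Surface) (D : S.Div) : S.inter 0 D = 0 :=
  (interL S D).map_zero

lemma inter_zero_right (S : Surface) (D : S.Div) : S.inter D 0 = 0 := by
  rw [S.inter_comm]; exact inter_zero_left S D

lemma inter_add_right (S : Surface) (A B D : S.Div) :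
    S.inter D (A + B) = S.inter D A + S.inter D B := by
  rw [S.inter_comm, S.inter_add_left, S.inter_comm A, S.inter_comm B]

lemma inter_neg_left (S : Surface) (A D : S.Div) : S.inter (-A) D = -S.inter A D :=
  map_neg (interL S D) A

lemma inter_neg_right (S : Surface) (A D : S.Div) : S.inter D (-A) = -S.inter D A := by
  rw [S.inter_comm, inter_neg_left, S.inter_comm]

lemma inter_sub_left (S : Surface) (A B D : S.Div) :
    S.inter (A - B) D = S.inter A D - S.inter B D := map_sub (interL S D) A B

lemma inter_sub_right (S : Surface) (A B D : S.Div) :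
    S.inter D (A - B) = S.inter D A - S.inter D B := by
  rw [S.inter_comm, inter_sub_left, S.inter_comm A, S.inter_comm B]

lemma inter_sum_left (S : Surface) {ι : Type*} (t : Finset ι) (F : ι → S.Div) (D : S.Div) :
    S.inter (∑ i ∈ t, F i) D = ∑ i ∈ t, S.inter (F i) D := map_sum (interL S D) F t

lemma inter_sum_right (S : Surface) {ι : Type*} (t : Finset ι) (F : ι → S.Div) (D : S.Div) :
    S.inter D (∑ i ∈ t, F i) = ∑ i ∈ t, S.inter D (F i) := by
  rw [S.inter_comm, inter_sum_left]
  exact Finset.sum_congr rfl fun i _ => S.inter_comm _ _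

lemma inter_zsmul_left (S : Surface) (c : ℤ) (A D : S.Div) :
    S.inter (c • A) D = c * S.inter A D := by
  have := map_zsmul (interL S D) c A
  simpa [interL, smul_eq_mul] using this

lemma inter_zsmul_right (S : Surface) (c : ℤ) (A D : S.Div) :
    S.inter D (c • A) = c * S.inter D A := by
  rw [S.inter_comm, inter_zsmul_left, S.inter_comm]

variable {S : Surface} {s : ℕ} (B : Blowdown S s)

lemma exc_neg {A : S.Div} (h : B.Exc A) : B.Exc (-A) := by
  simpa using B.exc_sub B.exc_zero h

lemma exc_add {A C : S.Div} (hA : B.Exc A) (hC : B.Exc C) : B.Exc (A + C) := by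
  simpa [sub_neg_eq_add] using B.exc_sub hA (exc_neg B hC)

lemma exc_zsmul (c : ℤ) {A : S.Div} (h : B.Exc A) : B.Exc (c • A) := by
  induction c using Int.induction_on with
  | zero => simpa using B.exc_zero
  | succ i ih => rw [add_smul, one_smul]; exact exc_add B ih h
  | pred i ih => rw [sub_smul, one_smul]; exact B.exc_sub ih h

lemma exc_sum {ι : Type*} (t : Finset ι) (F : ι → S.Div) (h : ∀ i, B.Exc (F i)) :
    B.Exc (∑ i ∈ t, F i) := by
  classical
  induction t using Finset.induction_on with
  | empty => simpa using B.exc_zero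
  | insert _ _ hx ih => rw [Finset.sum_insert hx]; exact exc_add B (h _) ih



lemma sum_split {s : ℕ} {M : Type*} [AddCommMonoid M] {a b : Fin s} (hab : a ≠ b)
    (F : Fin s → M) :
    ∑ i, F i = F a + F b + ∑ i ∈ Finset.univ \ {a, b}, F i := by
  classical
  have hu : (Finset.univ : Finset (Fin s)) = {a, b} ∪ (Finset.univ \ {a, b}) :=
    (Finset.union_sdiff_of_subset (Finset.subset_univ _)).symm
  conv_lhs => rw [hu]
  rw [Finset.sum_union Finset.disjoint_sdiff, Finset.sum_pair hab]

lemma sum_sq_two {s : ℕ} (c : Fin s → ℤ) (hsum : ∑ i, c i = 0) (hsq : ∑ i, c i * c i = 2) :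
    ∃ a b : Fin s, a ≠ b ∧ c a = 1 ∧ c b = -1 ∧ ∀ i, i ≠ a → i ≠ b → c i = 0 := by
  classical
  have hex : ∃ a, c a ≠ 0 := by
    by_contra h
    push_neg at h
    rw [Finset.sum_eq_zero fun i _ => by rw [h i]; ring] at hsq
    omega
  obtain ⟨a, ha⟩ := hex
  have hex2 : ∃ b, b ≠ a ∧ c b ≠ 0 := by
    by_contra h
    push_neg at h
    have : ∑ i, c i = c a := Finset.sum_eq_single a
      (fun b _ hb => by by_contra hb'; exact hb' (h b hb)) (fun h' => absurd (Finset.mem_univ a) h')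
    omega
  obtain ⟨b, hba, hb⟩ := hex2
  have key : ∑ i, c i * c i =
      c a * c a + c b * c b + ∑ i ∈ (Finset.univ \ {a, b}), c i * c i :=
    sum_split hba.symm _
  have hnn : (0:ℤ) ≤ ∑ i ∈ (Finset.univ \ {a, b}), c i * c i :=
    Finset.sum_nonneg fun i _ => mul_self_nonneg _
  have ha1 : 1 ≤ c a * c a := by rcases ha.lt_or_gt with h | h <;> nlinarith
  have hb1 : 1 ≤ c b * c b := by rcases hb.lt_or_gt with h | h <;> nlinarith
  have haa : c a * c a = 1 := by nlinarith
  have hbb : c b * c b = 1 := by nlinarith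
  have hrest : ∀ i, i ≠ a → i ≠ b → c i = 0 := by
    intro i hia hib
    have hz : ∑ j ∈ (Finset.univ \ {a, b}), c j * c j = 0 := by omega
    have := (Finset.sum_eq_zero_iff_of_nonneg (fun j _ => mul_self_nonneg (c j))).mp hz i
      (by simp [Finset.mem_sdiff, hia, hib])
    nlinarith [this]
  have hca : c a = 1 ∨ c a = -1 := by
    rcases Int.isUnit_iff.mp (IsUnit.of_mul_eq_one _ haa) with h | h
    exacts [Or.inl h, Or.inr h]
  have hab' : c a + c b = 0 := by
    have h2 : ∑ i, c i = c a + c b + ∑ i ∈ (Finset.univ \ {a, b}), c i := sum_split hba.symm _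
    have hzero : ∑ i ∈ (Finset.univ \ {a, b}), c i = 0 := by
      apply Finset.sum_eq_zero
      intro i hi
      rw [Finset.mem_sdiff, Finset.mem_insert, Finset.mem_singleton] at hi
      exact hrest i (fun h => (hi.2 (Or.inl h))) (fun h => (hi.2 (Or.inr h)))
    omega
  rcases hca with h1 | h1
  · exact ⟨a, b, hba.symm, h1, by omega, hrest⟩
  · exact ⟨b, a, hba, by omega, h1, fun i h h' => hrest i h' h⟩

/-- Every exceptional class with square `-2` orthogonal to `K` is a difference of
two distinct total exceptional divisors. -/
lemma exc_neg_two {Γ : S.Div} (hE : B.Exc Γ) (h2 : S.inter Γ Γ = -2)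
    (hK : S.inter S.K Γ = 0) : ∃ a b : Fin s, a ≠ b ∧ Γ = B.E a - B.E b := by
  classical
  set c : Fin s → ℤ := fun i => S.inter Γ (B.E i) with hc
  -- Γ = -∑ c i • E i
  have hZ : Γ + ∑ i, c i • B.E i = 0 := by
    apply B.exc_span
    · exact exc_add B hE (exc_sum B _ _ fun i => exc_zsmul B _ (B.exc_E i))
    · intro j
      rw [S.inter_add_left, inter_sum_left]
      have : ∀ i, S.inter (c i • B.E i) (B.E j) = c i * (if i = j then -1 else 0) := by
        intro i; rw [inter_zsmul_left, B.EE]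
      rw [Finset.sum_congr rfl fun i _ => this i]
      simp only [mul_ite, mul_neg_one, mul_zero, Finset.sum_ite_eq', Finset.mem_univ, if_true]
      show S.inter Γ (B.E j) + -S.inter Γ (B.E j) = 0
      ring
  have hGam : Γ = -∑ i, c i • B.E i := by
    have := eq_neg_of_add_eq_zero_left hZ
    exact this
  have hcc : ∀ i, S.inter Γ (c i • B.E i) = c i * c i := fun i => inter_zsmul_right S _ _ _
  -- ∑ c i * c i = 2
  have hsq : ∑ i, c i * c i = 2 := by
    have h' : S.inter Γ Γ = S.inter Γ (-∑ i, c i • B.E i) := congrArg (S.inter Γ) hGam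
    rw [inter_neg_right, inter_sum_right, Finset.sum_congr rfl fun i _ => hcc i] at h'
    omega
  -- ∑ c i = 0
  have hsum : ∑ i, c i = 0 := by
    have h' := hK
    rw [B.K_eq, S.inter_add_left, B.pK_exc hE, inter_sum_left] at h'
    have he : ∑ i, S.inter (B.E i) Γ = ∑ i, c i :=
      Finset.sum_congr rfl fun i _ => S.inter_comm _ _
    omega
  obtain ⟨a, b, hab, ha, hb, hrest⟩ := sum_sq_two c hsum hsq
  refine ⟨b, a, hab.symm, ?_⟩
  rw [hGam]
  have hsplit : ∑ i, c i • B.E i = B.E a - B.E b := by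
    rw [sum_split hab (fun i => c i • B.E i), Finset.sum_eq_zero (fun i hi => by
      simp only [Finset.mem_sdiff, Finset.mem_insert, Finset.mem_singleton] at hi
      rw [hrest i (fun h => hi.2 (Or.inl h)) (fun h => hi.2 (Or.inr h)), zero_smul]),
      ha, hb]
    module
  rw [hsplit]
  abel

end Aux

namespace Aux2

variable {β : Type*} [DecidableEq β]

/-- Kronecker delta. -/
def δ (x y : β) : ℤ := if x = y then 1 else 0

lemma δ_eq {x y : β} (h : x = y) : δ x y = 1 := by simp [δ, h]
lemma δ_ne {x y : β} (h : x ≠ y) : δ x y = 0 := by simp [δ, h]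

lemma delta_one {f0 g0 fk gk : β} (h0 : f0 ≠ g0) (hk : fk ≠ gk)
    (h : δ f0 gk + δ g0 fk - δ f0 fk - δ g0 gk = 1) :
    (f0 = gk ∧ g0 ≠ fk ∧ f0 ≠ fk ∧ g0 ≠ gk) ∨
    (g0 = fk ∧ f0 ≠ gk ∧ f0 ≠ fk ∧ g0 ≠ gk) := by
  by_cases h1 : f0 = gk <;> by_cases h2 : g0 = fk
  · have h3 : f0 ≠ fk := fun h' => hk (h'.symm.trans h1)
    have h4 : g0 ≠ gk := fun h' => hk (h2.symm.trans h')
    rw [δ_eq h1, δ_eq h2, δ_ne h3, δ_ne h4] at h; omega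
  · have h3 : f0 ≠ fk := fun h' => hk (h'.symm.trans h1)
    have h4 : g0 ≠ gk := fun h' => h0 (h1.trans h'.symm)
    exact Or.inl ⟨h1, h2, h3, h4⟩
  · have h3 : f0 ≠ fk := fun h' => h0 (h'.trans h2.symm)
    have h4 : g0 ≠ gk := fun h' => hk (h2.symm.trans h')
    exact Or.inr ⟨h2, h1, h3, h4⟩
  · rw [δ_ne h1, δ_ne h2] at h
    unfold δ at h; split_ifs at h <;> omega

/-- Two `B`-type legs meeting the same node would intersect negatively. -/
lemma caseB {f0 fk gk fl gl : β} (hkk : fk ≠ gk) (hll : fl ≠ gl)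
    (hk : f0 = gk ∧ f0 ≠ fk) (hl : f0 = gl ∧ f0 ≠ fl)
    (h : δ fk gl + δ gk fl - δ fk fl - δ gk gl = 0) : False := by
  have e1 : δ fk gl = 0 := δ_ne fun h' => hk.2 (h'.trans hl.1.symm).symm
  have e2 : δ gk fl = 0 := δ_ne fun h' => hl.2 (hk.1.trans h')
  have e4 : δ gk gl = 1 := δ_eq ((hk.1.symm.trans hl.1 : gk = gl))
  rw [e1, e2, e4] at h
  unfold δ at h; split_ifs at h <;> omega

lemma caseC {g0 fk gk fl gl : β} (hkk : fk ≠ gk) (hll : fl ≠ gl)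
    (hk : g0 = fk ∧ g0 ≠ gk) (hl : g0 = fl ∧ g0 ≠ gl)
    (h : δ fk gl + δ gk fl - δ fk fl - δ gk gl = 0) : False := by
  have e1 : δ fk gl = 0 := δ_ne fun h' => hl.2 (hk.1.trans h')
  have e2 : δ gk fl = 0 := δ_ne fun h' => hk.2 (hl.1.trans h'.symm)
  have e3 : δ fk fl = 1 := δ_eq (hk.1.symm.trans hl.1)
  rw [e1, e2, e3] at h
  unfold δ at h; split_ifs at h <;> omega

end Aux2

namespace Aux3

variable {n : ℕ} {β : Type*}

/-- From an "oriented chain" structure on the vertices of a connected graph,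
produce a path enumeration. -/
lemma chain_path (f g : Fin n → β)
    (hf : Function.Injective f) (hg : Function.Injective g)
    (G : SimpleGraph (Fin n))
    (hAdj : ∀ i j, G.Adj i j ↔ (i ≠ j ∧ (f i = g j ∨ f j = g i)))
    (hconn : G.Preconnected)
    (start : Fin n) (hstart : ∀ j, f j ≠ g start) :
    ∃ e : Fin n ≃ Fin n, ∀ i j : Fin n,
      G.Adj (e i) (e j) ↔ ((i : ℕ) + 1 = (j : ℕ) ∨ (j : ℕ) + 1 = (i : ℕ)) := by
  classical
  -- the successor map
  set nxt : Fin n → Fin n := fun i => if h : ∃ j, g j = f i then h.choose else i with hnxt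
  set e : ℕ → Fin n := fun k => nxt^[k] start with he
  have e_zero : e 0 = start := rfl
  have e_succ : ∀ k, e (k + 1) = nxt (e k) := fun k => Function.iterate_succ_apply' nxt k start
  have hsucc : ∀ i, (∃ j, g j = f i) → g (nxt i) = f i := by
    intro i h
    simp only [hnxt, dif_pos h]
    exact h.choose_spec
  -- injectivity along the trajectory
  have hinj : ∀ a b : ℕ, a < b → (∀ j < b, ∃ k, g k = f (e j)) → e a ≠ e b := by
    intro a
    induction a with
    | zero =>
      intro b hb hh heq
      obtain ⟨b', rfl⟩ : ∃ b', b = b' + 1 := ⟨b - 1, by omega⟩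
      have h1 : g (e (b' + 1)) = f (e b') := by
        rw [e_succ]; exact hsucc _ (hh b' (by omega))
      rw [← heq, e_zero] at h1
      exact hstart _ h1.symm
    | succ a ih =>
      intro b hb hh heq
      obtain ⟨b', rfl⟩ : ∃ b', b = b' + 1 := ⟨b - 1, by omega⟩
      have h1 : g (e (b' + 1)) = f (e b') := by
        rw [e_succ]; exact hsucc _ (hh b' (by omega))
      have h2 : g (e (a + 1)) = f (e a) := by
        rw [e_succ]; exact hsucc _ (hh a (by omega))
      rw [heq, h1] at h2
      exact ih b' (by omega) (fun j hj => hh j (by omega)) (hf h2.symm)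
  -- there is a stalling index
  have hstall : ∃ k, ¬ ∃ j, g j = f (e k) := by
    by_contra hall
    push_neg at hall
    have hi : Function.Injective (fun k : Fin (n + 1) => e k) := by
      intro a b hab
      rcases lt_trichotomy (a : ℕ) (b : ℕ) with h | h | h
      · exact absurd hab (hinj _ _ h (fun j _ => hall _))
      · exact Fin.ext h
      · exact absurd hab.symm (hinj _ _ h (fun j _ => hall _))
    have := Fintype.card_le_of_injective _ hi
    simp at this
  set m := Nat.find hstall with hm
  have hmstall : ¬ ∃ j, g j = f (e m) := Nat.find_spec hstall
  have hmmin : ∀ j, j < m → ∃ k, g k = f (e j) := fun j hj => by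
    by_contra h
    have : Nat.find hstall ≤ j := Nat.find_le h
    omega
  have einj : ∀ a b : ℕ, a ≤ m → b ≤ m → e a = e b → a = b := by
    intro a b ha hb heq
    rcases lt_trichotomy a b with h | h | h
    · exact absurd heq (hinj _ _ h (fun j hj => hmmin j (by omega)))
    · exact h
    · exact absurd heq.symm (hinj _ _ h (fun j hj => hmmin j (by omega)))
  -- the trajectory is closed under adjacency
  have hclosed : ∀ u v : Fin n, (∃ k, k ≤ m ∧ e k = u) → G.Adj u v → ∃ k, k ≤ m ∧ e k = v := by
    rintro u v ⟨k, hk, rfl⟩ hadj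
    rw [hAdj] at hadj
    rcases hadj.2 with h | h
    · -- v is the successor of e k
      have hks : ∃ j, g j = f (e k) := ⟨v, h.symm⟩
      have hklt : k < m := by
        by_contra h'
        exact hmstall (by rwa [show k = m by omega] at hks)
      have h2 : g (e (k + 1)) = f (e k) := by rw [e_succ]; exact hsucc _ hks
      exact ⟨k + 1, by omega, hg (h2.trans h)⟩
    · -- v is the predecessor of e k
      rcases Nat.eq_zero_or_pos k with rfl | hk0
      · rw [e_zero] at h
        exact absurd h (hstart v)
      · obtain ⟨k', rfl⟩ : ∃ k', k = k' + 1 := ⟨k - 1, by omega⟩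
        have h2 : g (e (k' + 1)) = f (e k') := by
          rw [e_succ]; exact hsucc _ (hmmin k' (by omega))
        rw [h2] at h
        exact ⟨k', by omega, (hf h).symm⟩
  -- surjectivity of the trajectory, by connectedness
  have hsurj : ∀ v : Fin n, ∃ k, k ≤ m ∧ e k = v := by
    have key : ∀ u v : Fin n, G.Walk u v → (∃ k, k ≤ m ∧ e k = u) → ∃ k, k ≤ m ∧ e k = v := by
      intro u v w
      induction w with
      | nil => exact id
      | cons h p ih => intro hu; exact ih (hclosed _ _ hu h)
    intro v
    obtain ⟨w⟩ := hconn start v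
    exact key start v w ⟨0, by omega, e_zero⟩
  -- assemble the equivalence
  set E' : Fin (m + 1) → Fin n := fun k => e k with hE'
  have hEinj : Function.Injective E' := fun a b hab =>
    Fin.ext (einj a b (Nat.lt_succ_iff.mp a.isLt) (Nat.lt_succ_iff.mp b.isLt) hab)
  have hEsurj : Function.Surjective E' := by
    intro v
    obtain ⟨k, hk, hek⟩ := hsurj v
    exact ⟨⟨k, by omega⟩, hek⟩
  have hbij : Function.Bijective E' := ⟨hEinj, hEsurj⟩
  have hcard : m + 1 = n := by simpa using Fintype.card_of_bijective hbij
  refine ⟨(finCongr hcard.symm).trans (Equiv.ofBijective E' hbij), fun i j => ?_⟩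
  have hee : ∀ i : Fin n, ((finCongr hcard.symm).trans (Equiv.ofBijective E' hbij)) i
      = e (i : ℕ) := fun i => rfl
  rw [hee i, hee j]
  have hi : (i : ℕ) ≤ m := by have := i.isLt; omega
  have hj : (j : ℕ) ≤ m := by have := j.isLt; omega
  constructor
  · intro hadj
    rw [hAdj] at hadj
    rcases hadj.2 with h | h
    · -- successor
      have hks : ∃ jj, g jj = f (e i) := ⟨e j, h.symm⟩
      have hilt : (i : ℕ) < m := by
        by_contra h'
        exact hmstall (by rwa [show (i : ℕ) = m by omega] at hks)
      have h2 : g (e ((i : ℕ) + 1)) = f (e i) := by rw [e_succ]; exact hsucc _ hks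
      exact Or.inl (einj _ _ (by omega) hj (hg (h2.trans h)))
    · -- predecessor
      rcases Nat.eq_zero_or_pos (i : ℕ) with hz | hk0
      · rw [hz, e_zero] at h
        exact absurd h (hstart _)
      · obtain ⟨i', hi'⟩ : ∃ i', (i : ℕ) = i' + 1 := ⟨(i : ℕ) - 1, by omega⟩
        have h2 : g (e (i' + 1)) = f (e i') := by
          rw [e_succ]; exact hsucc _ (hmmin i' (by omega))
        rw [hi', h2] at h
        have := einj _ _ hj (by omega) (hf h)
        omega
  · intro hij
    rcases hij with h | h
    · have hilt : (i : ℕ) < m := by omega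
      have h2 : g (e ((i : ℕ) + 1)) = f (e i) := by
        rw [e_succ]; exact hsucc _ (hmmin _ hilt)
      rw [h] at h2
      refine (hAdj _ _).mpr ⟨fun heq => ?_, Or.inl h2.symm⟩
      have := einj _ _ hi hj heq
      omega
    · have hjlt : (j : ℕ) < m := by omega
      have h2 : g (e ((j : ℕ) + 1)) = f (e j) := by
        rw [e_succ]; exact hsucc _ (hmmin _ hjlt)
      rw [h] at h2
      refine (hAdj _ _).mpr ⟨fun heq => ?_, Or.inr h2.symm⟩
      have := einj _ _ hi hj heq
      omega

end Aux3

-- extra delta lemmas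
namespace Aux2
variable {β : Type*} [DecidableEq β]
lemma δ01 (x y : β) : δ x y = 0 ∨ δ x y = 1 := by unfold δ; split_ifs <;> simp
lemma δ_eq_iff {x y : β} : δ x y = 1 ↔ x = y := by unfold δ; split_ifs with h <;> simp [h]
end Aux2

open Aux Aux2 in
lemma interEE {S : Surface} {s : ℕ} (B : Blowdown S s) (a b c d : Fin s) :
    S.inter (B.E a - B.E b) (B.E c - B.E d) =
      δ a d + δ b c - δ a c - δ b d := by
  rw [inter_sub_left, inter_sub_right, inter_sub_right, B.EE, B.EE, B.EE, B.EE]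
  unfold Aux2.δ
  split_ifs <;> ring

open Aux Aux2 Aux3

/-- an A-D-E configuration contracted by a birational morphism of
smooth projective surfaces is of type `Aₙ`; equivalently, no `D₄` configuration
(a central `-2`-curve `N₀` meeting three pairwise disjoint `-2`-curves
`N₁, N₂, N₃`) can be contracted. -/
theorem stmt16 (S : Surface) (s : ℕ) (B : Blowdown S s) :
    (∀ Δ : ADEConfig S, (∀ i, B.Exc (Δ.C i)) → Δ.IsTypeA) ∧
    (∀ N : Fin 4 → S.Div, Function.Injective N →
      (∀ i, S.Irr (N i) ∧ S.inter (N i) (N i) = -2 ∧ S.inter S.K (N i) = 0) →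
      (∀ i j, i ≠ j →
        S.inter (N i) (N j) = if i = 0 ∨ j = 0 then 1 else 0) →
      ¬ (∀ i, B.Exc (N i))) := by
  classical
  constructor
  · -- Part 1: a contracted A-D-E configuration is of type Aₙ.
    intro Δ hexc
    obtain ⟨f, g, hfg, hC⟩ : ∃ f g : Fin Δ.n → Fin s,
        (∀ i, f i ≠ g i) ∧ ∀ i, Δ.C i = B.E (f i) - B.E (g i) := by
      have h : ∀ i, ∃ a b : Fin s, a ≠ b ∧ Δ.C i = B.E a - B.E b := fun i =>
        Aux.exc_neg_two B (hexc i) (Δ.sq i) (Δ.KC i)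
      choose f g h1 h2 using h
      exact ⟨f, g, h1, h2⟩
    have hint : ∀ i j, S.inter (Δ.C i) (Δ.C j) =
        δ (f i) (g j) + δ (g i) (f j) - δ (f i) (f j) - δ (g i) (g j) := by
      intro i j; rw [hC i, hC j, interEE]
    -- f and g are injective
    have hfinj : Function.Injective f := by
      intro i j hfij
      by_contra hij
      have h01 := Δ.int01 i j hij
      rw [hint] at h01
      have d1 : δ (f i) (g j) = 0 := δ_ne fun h => hfg j (hfij.symm.trans h)
      have d2 : δ (g i) (f j) = 0 := δ_ne fun h => hfg i (h.trans hfij.symm).symm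
      have d3 : δ (f i) (f j) = 1 := δ_eq hfij
      rcases δ01 (g i) (g j) with d4 | d4 <;> rw [d1, d2, d3, d4] at h01 <;> omega
    have hginj : Function.Injective g := by
      intro i j hgij
      by_contra hij
      have h01 := Δ.int01 i j hij
      rw [hint] at h01
      have d1 : δ (f i) (g j) = 0 := δ_ne fun h => hfg i (h.trans hgij.symm)
      have d2 : δ (g i) (f j) = 0 := δ_ne fun h => hfg j (hgij.symm.trans h).symm
      have d4 : δ (g i) (g j) = 1 := δ_eq hgij
      rcases δ01 (f i) (f j) with d3 | d3 <;> rw [d1, d2, d3, d4] at h01 <;> omega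
    -- characterization of adjacency
    have hAdj : ∀ i j, (configGraph S Δ.C).Adj i j ↔
        (i ≠ j ∧ (f i = g j ∨ f j = g i)) := by
      intro i j
      show (i ≠ j ∧ S.inter (Δ.C i) (Δ.C j) = 1) ↔ _
      constructor
      · rintro ⟨hij, hone⟩
        refine ⟨hij, ?_⟩
        rw [hint] at hone
        have d3 : δ (f i) (f j) = 0 := δ_ne fun h => hij (hfinj h)
        have d4 : δ (g i) (g j) = 0 := δ_ne fun h => hij (hginj h)
        rw [d3, d4] at hone
        rcases δ01 (f i) (g j) with d1 | d1
        · rcases δ01 (g i) (f j) with d2 | d2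
          · rw [d1, d2] at hone; omega
          · exact Or.inr (δ_eq_iff.mp d2).symm
        · exact Or.inl (δ_eq_iff.mp d1)
      · rintro ⟨hij, hor⟩
        refine ⟨hij, ?_⟩
        have h01 := Δ.int01 i j hij
        rw [hint] at h01 ⊢
        have d3 : δ (f i) (f j) = 0 := δ_ne fun h => hij (hfinj h)
        have d4 : δ (g i) (g j) = 0 := δ_ne fun h => hij (hginj h)
        rw [d3, d4] at h01 ⊢
        rcases hor with h | h
        · have d1 : δ (f i) (g j) = 1 := δ_eq h
          rcases δ01 (g i) (f j) with d2 | d2 <;> rw [d1, d2] at h01 ⊢ <;> omega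
        · have d2 : δ (g i) (f j) = 1 := δ_eq h.symm
          rcases δ01 (f i) (g j) with d1 | d1 <;> rw [d1, d2] at h01 ⊢ <;> omega
    -- existence of a starting curve (one with no predecessor)
    have hstart : ∃ i, ∀ j, f j ≠ g i := by
      by_contra h
      push_neg at h
      choose p hp using h
      have hpinj : Function.Injective p := fun i j hij =>
        hginj (by rw [← hp i, ← hp j, hij])
      have hpbij : Function.Bijective p :=
        ⟨hpinj, Finite.surjective_of_injective hpinj⟩
      have hsum0 : ∑ i, Δ.C i = 0 := by
        have h1 : ∑ i, Δ.C i = ∑ i, B.E (f i) - ∑ i, B.E (g i) := by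
          rw [← Finset.sum_sub_distrib]
          exact Finset.sum_congr rfl fun i _ => hC i
        have h2 : ∑ i, B.E (g i) = ∑ i, B.E (f (p i)) :=
          Finset.sum_congr rfl fun i _ => by rw [hp i]
        have h3 : ∑ i, B.E (f (p i)) = ∑ i, B.E (f i) :=
          hpbij.sum_comp (fun j => B.E (f j))
        rw [h1, h2, h3, sub_self]
      have hone : (fun _ : Fin Δ.n => (1 : ℤ)) ≠ 0 := by
        intro h'
        have := congrFun h' ⟨0, Δ.npos⟩
        simp at this
      have hneg := Δ.negdef _ hone
      have hcalc : ∑ i, ∑ j, (1 : ℤ) * 1 * S.inter (Δ.C i) (Δ.C j) =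
          S.inter (∑ i, Δ.C i) (∑ j, Δ.C j) := by
        rw [inter_sum_left]
        refine Finset.sum_congr rfl fun i _ => ?_
        rw [inter_sum_right]
        exact Finset.sum_congr rfl fun j _ => by ring
      rw [hcalc, hsum0, inter_zero_left] at hneg
      omega
    obtain ⟨st, hst⟩ := hstart
    exact Aux3.chain_path f g hfinj hginj (configGraph S Δ.C) hAdj
      Δ.tree.isConnected.preconnected st hst
  · -- Part 2: no D₄ configuration can be contracted.
    intro N _hNinj hN hNint hexc
    obtain ⟨f, g, hfg, hC⟩ : ∃ f g : Fin 4 → Fin s,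
        (∀ i, f i ≠ g i) ∧ ∀ i, N i = B.E (f i) - B.E (g i) := by
      have h : ∀ i, ∃ a b : Fin s, a ≠ b ∧ N i = B.E a - B.E b := fun i =>
        Aux.exc_neg_two B (hexc i) (hN i).2.1 (hN i).2.2
      choose f g h1 h2 using h
      exact ⟨f, g, h1, h2⟩
    have hint : ∀ i j, S.inter (N i) (N j) =
        δ (f i) (g j) + δ (g i) (f j) - δ (f i) (f j) - δ (g i) (g j) := by
      intro i j; rw [hC i, hC j, interEE]
    have hleg : ∀ k : Fin 4, k ≠ 0 →
        ((f 0 = g k ∧ g 0 ≠ f k ∧ f 0 ≠ f k ∧ g 0 ≠ g k) ∨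
         (g 0 = f k ∧ f 0 ≠ g k ∧ f 0 ≠ f k ∧ g 0 ≠ g k)) := by
      intro k hk
      apply Aux2.delta_one (hfg 0) (hfg k)
      have h := hNint 0 k (Ne.symm hk)
      rw [hint, if_pos (Or.inl rfl)] at h
      exact h
    have hzero : ∀ k l : Fin 4, k ≠ 0 → l ≠ 0 → k ≠ l →
        δ (f k) (g l) + δ (g k) (f l) - δ (f k) (f l) - δ (g k) (g l) = 0 := by
      intro k l hk hl hkl
      have h := hNint k l hkl
      rw [hint, if_neg (by simp [hk, hl])] at h
      exact h
    rcases hleg 1 (by decide) with h1 | h1 <;>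
      rcases hleg 2 (by decide) with h2 | h2 <;>
        rcases hleg 3 (by decide) with h3 | h3
    · exact Aux2.caseB (hfg 1) (hfg 2) ⟨h1.1, h1.2.2.1⟩ ⟨h2.1, h2.2.2.1⟩
        (hzero 1 2 (by decide) (by decide) (by decide))
    · exact Aux2.caseB (hfg 1) (hfg 2) ⟨h1.1, h1.2.2.1⟩ ⟨h2.1, h2.2.2.1⟩
        (hzero 1 2 (by decide) (by decide) (by decide))
    · exact Aux2.caseB (hfg 1) (hfg 3) ⟨h1.1, h1.2.2.1⟩ ⟨h3.1, h3.2.2.1⟩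
        (hzero 1 3 (by decide) (by decide) (by decide))
    · exact Aux2.caseC (hfg 2) (hfg 3) ⟨h2.1, h2.2.2.2⟩ ⟨h3.1, h3.2.2.2⟩
        (hzero 2 3 (by decide) (by decide) (by decide))
    · exact Aux2.caseB (hfg 2) (hfg 3) ⟨h2.1, h2.2.2.1⟩ ⟨h3.1, h3.2.2.1⟩
        (hzero 2 3 (by decide) (by decide) (by decide))
    · exact Aux2.caseC (hfg 1) (hfg 3) ⟨h1.1, h1.2.2.2⟩ ⟨h3.1, h3.2.2.2⟩
        (hzero 1 3 (by decide) (by decide) (by decide))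
    · exact Aux2.caseC (hfg 1) (hfg 2) ⟨h1.1, h1.2.2.2⟩ ⟨h2.1, h2.2.2.2⟩
        (hzero 1 2 (by decide) (by decide) (by decide))
    · exact Aux2.caseC (hfg 1) (hfg 2) ⟨h1.1, h1.2.2.2⟩ ⟨h2.1, h2.2.2.2⟩
        (hzero 1 2 (by decide) (by decide) (by decide))
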